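/- arXiv:2407.19791 — 4 statements merged into one kernel-verified Lean document; each statement's English description precedes it below -/
import Mathlib

section
/- If a function f : Z_p^d → M has a Mahler expansion f(x) = Σ_n a_n binom(x,n) with val_M(a_n) → ∞, then inf over x ∈ Z_p^d of val_M(f(x)) equals inf over n ∈ Z_{≥0}^d of val_M(a_n). -/
open Finset Filter
open scoped ENNReal NNReal

variable {p : ℕ} [Fact p.Prime]

/-- The binomial coefficient `binom(x,n)` of a `p`-adic integer. -/
noncomputable def pchoose (x : ℤ_[p]) (n : ℕ) : ℤ_[p] :=
  if h : ‖(∏ i ∈ Finset.range n, ((x : ℚ_[p]) - (i : ℚ_[p]))) / (n.factorial : ℚ_[p])‖ ≤ 1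
  then ⟨_, h⟩ else 0

/-- The multivariate binomial coefficient `binom(x,n) = ∏ binom(x_k, n_k)`. -/
noncomputable def pchoosePi {d : ℕ} (x : Fin d → ℤ_[p]) (n : Fin d → ℕ) : ℤ_[p] :=
  ∏ k, pchoose (x k) (n k)

/-- The difference operator in direction `y`. -/
noncomputable def dshift {d : ℕ} {M : Type*} [AddCommGroup M] (y : Fin d → ℤ_[p])
    (f : (Fin d → ℤ_[p]) → M) : (Fin d → ℤ_[p]) → M :=
  fun x => f (x + y) - f x

/-- The difference operator `Δ_i` in the `i`-th coordinate direction. -/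
noncomputable def ddelta {d : ℕ} {M : Type*} [AddCommGroup M] (i : Fin d) :
    ((Fin d → ℤ_[p]) → M) → ((Fin d → ℤ_[p]) → M) :=
  dshift (Pi.single i 1)

/-- The iterated multivariate difference operator `Δ^n = Δ_1^{n_1} ∘ ... ∘ Δ_d^{n_d}`. -/
noncomputable def dpow {d : ℕ} {M : Type*} [AddCommGroup M] (n : Fin d → ℕ)
    (f : (Fin d → ℤ_[p]) → M) : (Fin d → ℤ_[p]) → M :=
  ((List.finRange d).foldr (fun i g => (ddelta i)^[n i] ∘ g) id) f

/-- The `n`-th Mahler coefficient `a_n(f) = Δ^n(f)(0)` of a multivariable function. -/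
noncomputable def mahlerCoeff {d : ℕ} {M : Type*} [AddCommGroup M]
    (f : (Fin d → ℤ_[p]) → M) (n : Fin d → ℕ) : M :=
  dpow n f 0

/-- Auxiliary: nonarchimedean bound on a finite sum. -/
lemma aux_sum_norm_le {M : Type*} [NormedAddCommGroup M]
    (hna : ∀ a b : M, ‖a + b‖ ≤ max ‖a‖ ‖b‖) {ι : Type*} (s : Finset ι) (g : ι → M)
    {C : ℝ≥0∞} (h : ∀ i ∈ s, (‖g i‖₊ : ℝ≥0∞) ≤ C) : (‖∑ i ∈ s, g i‖₊ : ℝ≥0∞) ≤ C := by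
  induction s using Finset.cons_induction with
  | empty => simp
  | cons i s hi ih =>
    rw [Finset.sum_cons]
    have h1 : ‖g i + ∑ j ∈ s, g j‖₊ ≤ max ‖g i‖₊ ‖∑ j ∈ s, g j‖₊ := by
      simpa [← NNReal.coe_le_coe] using hna (g i) (∑ j ∈ s, g j)
    calc (‖g i + ∑ j ∈ s, g j‖₊ : ℝ≥0∞)
        ≤ max (‖g i‖₊ : ℝ≥0∞) (‖∑ j ∈ s, g j‖₊ : ℝ≥0∞) := by exact_mod_cast h1
      _ ≤ C := max_le (h i (Finset.mem_cons_self i s))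
          (ih fun j hj => h j (Finset.mem_cons_of_mem hj))

/-- Auxiliary: the product defining `pchoose` at a natural number. -/
lemma aux_prod_natCast (m n : ℕ) :
    ∏ i ∈ Finset.range n, ((m : ℚ_[p]) - (i : ℚ_[p])) = (m.descFactorial n : ℚ_[p]) := by
  induction n with
  | zero => simp
  | succ n ih =>
    rw [Finset.prod_range_succ, ih, Nat.descFactorial_succ]
    rcases le_or_gt n m with h | h
    · push_cast [Nat.cast_sub h]
      ring
    · rw [Nat.descFactorial_eq_zero_iff_lt.mpr h]
      push_cast
      ring

/-- Auxiliary: `pchoose` at a natural number is the usual binomial coefficient. -/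
lemma aux_pchoose_natCast (m n : ℕ) : pchoose (m : ℤ_[p]) n = (m.choose n : ℤ_[p]) := by
  have hq : (∏ i ∈ Finset.range n, (((m : ℤ_[p]) : ℚ_[p]) - (i : ℚ_[p]))) / (n.factorial : ℚ_[p])
      = (m.choose n : ℚ_[p]) := by
    rw [PadicInt.coe_natCast, aux_prod_natCast, Nat.descFactorial_eq_factorial_mul_choose]
    push_cast
    exact mul_div_cancel_left₀ _ (Nat.cast_ne_zero.mpr n.factorial_ne_zero)
  have hle : ‖(∏ i ∈ Finset.range n, (((m : ℤ_[p]) : ℚ_[p]) - (i : ℚ_[p])))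
      / (n.factorial : ℚ_[p])‖ ≤ 1 := by
    rw [hq]
    exact_mod_cast Padic.norm_int_le_one ((m.choose n : ℤ))
  unfold pchoose
  erw [dif_pos hle]
  exact Subtype.ext (hq.trans (PadicInt.coe_natCast _).symm)

/-- Auxiliary: `pchoosePi` at a tuple of naturals. -/
lemma aux_pchoosePi_natCast {d : ℕ} (m n : Fin d → ℕ) :
    pchoosePi (fun k => ((m k : ℕ) : ℤ_[p])) n = ((∏ k, (m k).choose (n k) : ℕ) : ℤ_[p]) := by
  rw [pchoosePi, Nat.cast_prod]
  exact Finset.prod_congr rfl fun k _ => aux_pchoose_natCast (m k) (n k)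

/- STATEMENT 5: if f has a Mahler expansion with coefficients tending to 0,
then inf_x val_M(f x) = inf_n val_M(a_n); multiplicatively ⨆ₓ ‖f x‖ = ⨆ₙ ‖aₙ‖. -/
theorem stmt5 {d : ℕ} {M : Type*} [NormedAddCommGroup M] [Module ℤ_[p] M]
    [IsBoundedSMul ℤ_[p] M]
    (hna : ∀ a b : M, ‖a + b‖ ≤ max ‖a‖ ‖b‖)
    (f : (Fin d → ℤ_[p]) → M) (a : (Fin d → ℕ) → M)
    (ha : Tendsto (fun n => ‖a n‖) cofinite (nhds 0))
    (hsum : ∀ x, HasSum (fun n => pchoosePi x n • a n) (f x)) :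
    (⨆ x, (‖f x‖₊ : ℝ≥0∞)) = ⨆ n, (‖a n‖₊ : ℝ≥0∞) := by
  have hterm : ∀ (x : Fin d → ℤ_[p]) (n : Fin d → ℕ),
      (‖pchoosePi x n • a n‖₊ : ℝ≥0∞) ≤ (‖a n‖₊ : ℝ≥0∞) := by
    intro x n
    have h1 : ‖pchoosePi x n • a n‖₊ ≤ ‖pchoosePi x n‖₊ * ‖a n‖₊ := nnnorm_smul_le _ _
    have h2 : ‖pchoosePi x n‖₊ ≤ 1 := by
      simpa [← NNReal.coe_le_coe] using (pchoosePi x n).norm_le_one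
    exact_mod_cast h1.trans (by simpa using mul_le_mul_left h2 ‖a n‖₊)
  apply le_antisymm
  · refine iSup_le fun x => ?_
    have hbd : ∀ s : Finset (Fin d → ℕ),
        (‖∑ n ∈ s, pchoosePi x n • a n‖₊ : ℝ≥0∞) ≤ ⨆ n, (‖a n‖₊ : ℝ≥0∞) := by
      intro s
      exact aux_sum_norm_le hna s _ fun n _ =>
        (hterm x n).trans (le_iSup (fun n => (‖a n‖₊ : ℝ≥0∞)) n)
    exact le_of_tendsto'
      (((ENNReal.continuous_coe.comp continuous_nnnorm).tendsto (f x)).comp (hsum x)) hbd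
  · refine iSup_le fun n => ?_
    suffices H : ∀ N : ℕ, ∀ n : Fin d → ℕ, (∑ k, n k) = N →
        (‖a n‖₊ : ℝ≥0∞) ≤ ⨆ x, (‖f x‖₊ : ℝ≥0∞) from H _ n rfl
    intro N
    induction N using Nat.strong_induction_on with
    | _ N IH =>
      intro m hm
      set x : Fin d → ℤ_[p] := fun k => ((m k : ℕ) : ℤ_[p]) with hx
      set s : Finset (Fin d → ℕ) := Fintype.piFinset fun k => Finset.range (m k + 1) with hs
      have hfin : ∀ n ∉ s, pchoosePi x n • a n = 0 := by
        intro n hn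
        rw [hs, Fintype.mem_piFinset] at hn
        push_neg at hn
        obtain ⟨k, hk⟩ := hn
        have hk' : m k < n k := by simpa [Nat.lt_succ_iff] using hk
        have : (∏ j, (m j).choose (n j)) = 0 :=
          Finset.prod_eq_zero (Finset.mem_univ k) (Nat.choose_eq_zero_of_lt hk')
        rw [hx, aux_pchoosePi_natCast, this, Nat.cast_zero, zero_smul]
      have hfm : ∑ n ∈ s, pchoosePi x n • a n = f x :=
        (hasSum_sum_of_ne_finset_zero hfin).unique (hsum x)
      have hmem : m ∈ s := by
        rw [hs, Fintype.mem_piFinset]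
        intro k
        simp [Nat.lt_succ_iff]
      have hone : pchoosePi x m = 1 := by
        rw [hx, aux_pchoosePi_natCast]
        simp
      have hsplit : f x = a m + ∑ n ∈ s.erase m, pchoosePi x n • a n := by
        rw [← hfm, ← Finset.add_sum_erase _ _ hmem, hone, one_smul]
      have harest : (‖∑ n ∈ s.erase m, pchoosePi x n • a n‖₊ : ℝ≥0∞)
          ≤ ⨆ x, (‖f x‖₊ : ℝ≥0∞) := by
        refine aux_sum_norm_le hna _ _ fun n hn => (hterm x n).trans ?_
        have hns : n ∈ s := Finset.mem_of_mem_erase hn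
        have hne : n ≠ m := Finset.ne_of_mem_erase hn
        rw [hs, Fintype.mem_piFinset] at hns
        have hle : ∀ k, n k ≤ m k := fun k => by
          simpa [Nat.lt_succ_iff] using hns k
        have hlt : ∑ k, n k < N := by
          rw [← hm]
          refine Finset.sum_lt_sum (fun k _ => hle k) ?_
          by_contra h
          push_neg at h
          exact hne (funext fun k => le_antisymm (hle k) (h k (Finset.mem_univ k)))
        exact IH _ hlt n rfl
      have hdiff : a m = f x + -(∑ n ∈ s.erase m, pchoosePi x n • a n) := by
        rw [hsplit]; abel
      have hmax : ‖a m‖₊ ≤ max ‖f x‖₊ ‖∑ n ∈ s.erase m, pchoosePi x n • a n‖₊ := by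
        rw [hdiff]
        simpa [← NNReal.coe_le_coe] using
          hna (f x) (-(∑ n ∈ s.erase m, pchoosePi x n • a n))
      calc (‖a m‖₊ : ℝ≥0∞)
          ≤ max (‖f x‖₊ : ℝ≥0∞) (‖∑ n ∈ s.erase m, pchoosePi x n • a n‖₊ : ℝ≥0∞) := by
            exact_mod_cast hmax
        _ ≤ ⨆ x, (‖f x‖₊ : ℝ≥0∞) :=
            max_le (le_iSup (fun x => (‖f x‖₊ : ℝ≥0∞)) x) harest
end

section
/- The space C^{λ-an}(Z_p^d, M) of functions whose Mahler coefficients satisfy val_M(a_n(f)) − p^λ|n| → ∞ is stable under the shift operators sh_z for every z ∈ Z_p^d, and each sh_z acts on it as an isometry for the valuation val_λ(f) = inf_n (val_M(a_n(f)) − ⌊p^λ n⌋). -/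
open Finset Filter
open scoped ENNReal NNReal

variable {p : ℕ} [Fact p.Prime]

/-- Membership in `C^{λ-an}(ℤ_p^d, M)`: `f` is continuous and its Mahler coefficients
satisfy `val(a_n) - p^λ |n| → ∞`, i.e. `‖a_n‖ · p^{p^λ |n|} → 0`. -/
noncomputable def CondLa {d : ℕ} {M : Type*} [NormedAddCommGroup M] (p : ℕ) [Fact p.Prime]
    (lam : ℝ) (f : (Fin d → ℤ_[p]) → M) : Prop :=
  Continuous f ∧
    Tendsto (fun n : Fin d → ℕ =>
        ‖mahlerCoeff f n‖ * (p : ℝ) ^ ((p : ℝ) ^ lam * (∑ i, (n i : ℝ))))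
      cofinite (nhds 0)

/-- The multiplicative avatar `p^{-val_λ(f)}` of the valuation
`val_λ(f) = inf_n (val(a_n(f)) - ⌊p^λ n⌋)`, where `⌊p^λ n⌋ = Σ_i ⌊p^λ n_i⌋`. -/
noncomputable def Rlam {d : ℕ} {M : Type*} [NormedAddCommGroup M] (p : ℕ) [Fact p.Prime]
    (lam : ℝ) (f : (Fin d → ℤ_[p]) → M) : ℝ≥0∞ :=
  ⨆ n : Fin d → ℕ,
    ENNReal.ofReal (‖mahlerCoeff f n‖ * (p : ℝ) ^ ((∑ i, ⌊(p : ℝ) ^ lam * (n i : ℝ)⌋) : ℤ))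

section Aux
variable {d : ℕ} {M : Type*} [AddCommGroup M]

noncomputable def foldF (L : List (Fin d)) (n : Fin d → ℕ) (f : (Fin d → ℤ_[p]) → M) :
    (Fin d → ℤ_[p]) → M :=
  (L.foldr (fun i g => (ddelta i)^[n i] ∘ g) id) f

lemma dpow_eq_foldF (n : Fin d → ℕ) (f : (Fin d → ℤ_[p]) → M) :
    dpow n f = foldF (List.finRange d) n f := rfl

@[simp] lemma foldF_nil (n : Fin d → ℕ) (f : (Fin d → ℤ_[p]) → M) : foldF [] n f = f := rfl

lemma foldF_cons (j : Fin d) (T : List (Fin d)) (n : Fin d → ℕ) (f : (Fin d → ℤ_[p]) → M) :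
    foldF (j :: T) n f = (ddelta j)^[n j] (foldF T n f) := rfl

lemma dshift_dshift (y w : Fin d → ℤ_[p]) (f : (Fin d → ℤ_[p]) → M) :
    dshift y (dshift w f) = dshift w (dshift y f) := by
  funext x
  simp only [dshift]
  rw [add_right_comm x w y]
  abel

lemma ddelta_comm (i j : Fin d) :
    Function.Commute (ddelta (p := p) (d := d) (M := M) i) (ddelta j) :=
  fun f => dshift_dshift _ _ f

lemma ddelta_iterate (i j : Fin d) (a : ℕ) (f : (Fin d → ℤ_[p]) → M) :
    ddelta i ((ddelta j)^[a] f) = (ddelta j)^[a] (ddelta i f) :=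
  ((ddelta_comm i j).iterate_right a) f

lemma foldF_ddelta (L : List (Fin d)) (n : Fin d → ℕ) (i : Fin d) (f : (Fin d → ℤ_[p]) → M) :
    ddelta i (foldF L n f) = foldF L n (ddelta i f) := by
  induction L with
  | nil => rfl
  | cons j T IH => rw [foldF_cons, foldF_cons, ← IH, ddelta_iterate]

lemma foldF_congr {L : List (Fin d)} {n n' : Fin d → ℕ} (h : ∀ j ∈ L, n j = n' j)
    (f : (Fin d → ℤ_[p]) → M) : foldF L n f = foldF L n' f := by
  induction L with
  | nil => rfl
  | cons j T IH =>
    rw [foldF_cons, foldF_cons, h j (List.mem_cons_self),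
      IH (fun a ha => h a (List.mem_cons_of_mem j ha))]

lemma foldF_succ {L : List (Fin d)} {i : Fin d} (hi : i ∈ L) (hL : L.Nodup)
    (n : Fin d → ℕ) (f : (Fin d → ℤ_[p]) → M) :
    foldF L (Function.update n i (n i + 1)) f = foldF L n (ddelta i f) := by
  induction L with
  | nil => simp at hi
  | cons j T IH =>
    rcases List.nodup_cons.mp hL with ⟨hjT, hT⟩
    by_cases hj : j = i
    · subst hj
      rw [foldF_cons, foldF_cons,
        foldF_congr (n' := n) (fun a ha => Function.update_of_ne (by rintro rfl; exact hjT ha) _ _) f,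
        Function.update_self, Function.iterate_succ_apply, foldF_ddelta]
    · have hiT : i ∈ T := by
        rcases List.mem_cons.mp hi with h | h
        · exact absurd h.symm hj
        · exact h
      rw [foldF_cons, foldF_cons, Function.update_of_ne hj, IH hiT hT]

lemma dpow_update_succ (n : Fin d → ℕ) (i : Fin d) (f : (Fin d → ℤ_[p]) → M) :
    dpow (Function.update n i (n i + 1)) f = dpow n (ddelta i f) := by
  rw [dpow_eq_foldF, dpow_eq_foldF]
  exact foldF_succ (List.mem_finRange i) (List.nodup_finRange d) n f

lemma ddelta_dpow (n : Fin d → ℕ) (i : Fin d) (f : (Fin d → ℤ_[p]) → M) :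
    ddelta i (dpow n f) = dpow (Function.update n i (n i + 1)) f := by
  rw [dpow_update_succ, dpow_eq_foldF, dpow_eq_foldF, foldF_ddelta]

lemma dpow_zero (f : (Fin d → ℤ_[p]) → M) : dpow (0 : Fin d → ℕ) f = f := by
  rw [dpow_eq_foldF]
  induction (List.finRange d) with
  | nil => rfl
  | cons j T IH => rw [foldF_cons, IH]; rfl

lemma dpow_dpow_aux : ∀ (k : ℕ) (m n : Fin d → ℕ) (f : (Fin d → ℤ_[p]) → M),
    (∑ i, m i) = k → dpow m (dpow n f) = dpow (m + n) f := by
  intro k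
  induction k using Nat.strong_induction_on with
  | _ k IH =>
    intro m n f hk
    by_cases hm : m = 0
    · subst hm; rw [dpow_zero, zero_add]
    · obtain ⟨i, hi⟩ : ∃ i, m i ≠ 0 := by
        by_contra h; push_neg at h; exact hm (funext fun i => h i)
      set m' := Function.update m i (m i - 1) with hm'def
      have hmm : m = Function.update m' i (m' i + 1) := by
        funext j
        by_cases hj : j = i
        · subst hj
          rw [Function.update_self, hm'def, Function.update_self]
          omega
        · rw [Function.update_of_ne hj, hm'def, Function.update_of_ne hj]
      have hsum : (∑ j, m' j) < k := by
        rw [← hk]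
        refine Finset.sum_lt_sum (fun j _ => ?_) ⟨i, Finset.mem_univ i, ?_⟩
        · by_cases hj : j = i
          · subst hj; rw [hm'def, Function.update_self]; omega
          · rw [hm'def, Function.update_of_ne hj]
        · rw [hm'def, Function.update_self]; omega
      calc dpow m (dpow n f) = dpow (Function.update m' i (m' i + 1)) (dpow n f) := by rw [← hmm]
        _ = dpow m' (ddelta i (dpow n f)) := dpow_update_succ ..
        _ = dpow m' (dpow (Function.update n i (n i + 1)) f) := by rw [ddelta_dpow]
        _ = dpow (m' + Function.update n i (n i + 1)) f := IH _ hsum _ _ _ rfl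
        _ = dpow (m + n) f := by
            have : m' + Function.update n i (n i + 1) = m + n := by
              funext j
              by_cases hj : j = i
              · subst hj
                simp only [Pi.add_apply, hm'def, Function.update_self]
                omega
              · simp only [Pi.add_apply, hm'def, Function.update_of_ne hj]
            rw [this]

lemma dpow_dpow (m n : Fin d → ℕ) (f : (Fin d → ℤ_[p]) → M) :
    dpow m (dpow n f) = dpow (m + n) f :=
  dpow_dpow_aux _ m n f rfl

end Aux

section Shift
variable {d : ℕ} {M : Type*} [AddCommGroup M]

lemma dshift_shift (y z : Fin d → ℤ_[p]) (f : (Fin d → ℤ_[p]) → M) :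
    dshift y (fun x => f (z + x)) = fun x => dshift y f (z + x) := by
  funext x
  simp only [dshift, add_assoc]

lemma ddelta_iterate_shift (i : Fin d) (k : ℕ) (z : Fin d → ℤ_[p]) (f : (Fin d → ℤ_[p]) → M) :
    (ddelta i)^[k] (fun x => f (z + x)) = fun x => (ddelta i)^[k] f (z + x) := by
  induction k with
  | zero => rfl
  | succ k IH =>
    funext x
    rw [Function.iterate_succ_apply', Function.iterate_succ_apply', IH]
    exact congrFun (dshift_shift (Pi.single i 1) z ((ddelta i)^[k] f)) x

lemma foldF_shift (L : List (Fin d)) (n : Fin d → ℕ) (z : Fin d → ℤ_[p])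
    (f : (Fin d → ℤ_[p]) → M) :
    foldF L n (fun x => f (z + x)) = fun x => foldF L n f (z + x) := by
  induction L with
  | nil => rfl
  | cons j T IH => rw [foldF_cons, foldF_cons, IH, ddelta_iterate_shift]

lemma dpow_shift (n : Fin d → ℕ) (z : Fin d → ℤ_[p]) (f : (Fin d → ℤ_[p]) → M) :
    dpow n (fun x => f (z + x)) = fun x => dpow n f (z + x) := by
  rw [dpow_eq_foldF, dpow_eq_foldF, foldF_shift]

lemma mahlerCoeff_shift (n : Fin d → ℕ) (z : Fin d → ℤ_[p]) (f : (Fin d → ℤ_[p]) → M) :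
    mahlerCoeff (fun x => f (z + x)) n = dpow n f z := by
  rw [mahlerCoeff, dpow_shift]
  simp

end Shift

section Cont
variable {d : ℕ} {M : Type*} [NormedAddCommGroup M]

lemma continuous_dshift (y : Fin d → ℤ_[p]) {f : (Fin d → ℤ_[p]) → M} (hf : Continuous f) :
    Continuous (dshift y f) :=
  (hf.comp (continuous_id.add continuous_const)).sub hf

lemma continuous_ddelta_iterate (i : Fin d) (k : ℕ) {f : (Fin d → ℤ_[p]) → M}
    (hf : Continuous f) : Continuous ((ddelta i)^[k] f) := by
  induction k with
  | zero => exact hf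
  | succ k IH => rw [Function.iterate_succ_apply']; exact continuous_dshift _ IH

lemma continuous_foldF (L : List (Fin d)) (n : Fin d → ℕ) {f : (Fin d → ℤ_[p]) → M}
    (hf : Continuous f) : Continuous (foldF L n f) := by
  induction L with
  | nil => exact hf
  | cons j T IH => rw [foldF_cons]; exact continuous_ddelta_iterate _ _ IH

lemma continuous_dpow (n : Fin d → ℕ) {f : (Fin d → ℤ_[p]) → M} (hf : Continuous f) :
    Continuous (dpow n f) := by
  rw [dpow_eq_foldF]; exact continuous_foldF _ _ hf

end Cont

section Bound
variable {d : ℕ} {M : Type*} [NormedAddCommGroup M]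

lemma apply_add_single (g : (Fin d → ℤ_[p]) → M) (i : Fin d) (x : Fin d → ℤ_[p]) :
    g (x + Pi.single i 1) = g x + ddelta i g x := by
  simp [ddelta, dshift]

lemma norm_apply_natCast_le (hna : ∀ a b : M, ‖a + b‖ ≤ max ‖a‖ ‖b‖) :
    ∀ (k : ℕ) (K : Fin d → ℕ) (g : (Fin d → ℤ_[p]) → M), (∑ i, K i) = k →
    ∃ m : Fin d → ℕ, (∀ i, m i ≤ K i) ∧
      ‖g (fun i => ((K i : ℤ_[p])))‖ ≤ ‖dpow m g 0‖ := by
  intro k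
  induction k using Nat.strong_induction_on with
  | _ k IH =>
    intro K g hk
    by_cases hK : K = 0
    · subst hK
      refine ⟨0, fun i => le_refl _, ?_⟩
      rw [dpow_zero]
      simp only [Pi.zero_apply, Nat.cast_zero]
      exact le_refl _
    · obtain ⟨i, hi⟩ : ∃ i, K i ≠ 0 := by
        by_contra h; push_neg at h; exact hK (funext fun i => h i)
      set K' := Function.update K i (K i - 1) with hK'def
      have hsum : (∑ j, K' j) < k := by
        rw [← hk]
        refine Finset.sum_lt_sum (fun j _ => ?_) ⟨i, Finset.mem_univ i, ?_⟩
        · by_cases hj : j = i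
          · subst hj; rw [hK'def, Function.update_self]; omega
          · rw [hK'def, Function.update_of_ne hj]
        · rw [hK'def, Function.update_self]; omega
      have hcast : (fun j => ((K j : ℤ_[p]))) =
          (fun j => ((K' j : ℤ_[p]))) + Pi.single i 1 := by
        funext j
        by_cases hj : j = i
        · subst hj
          simp only [Pi.add_apply, hK'def, Function.update_self, Pi.single_eq_same]
          rw [← Nat.cast_one (R := ℤ_[p]), ← Nat.cast_add]
          congr 1
          omega
        · simp only [Pi.add_apply, hK'def, Function.update_of_ne hj,
            Pi.single_eq_of_ne hj, add_zero]
      obtain ⟨m1, hm1le, hm1⟩ := IH _ hsum K' g rfl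
      obtain ⟨m2, hm2le, hm2⟩ := IH _ hsum K' (ddelta i g) rfl
      have hm2' : ‖ddelta i g (fun j => ((K' j : ℤ_[p])))‖ ≤
          ‖dpow (Function.update m2 i (m2 i + 1)) g 0‖ := by
        rwa [dpow_update_succ]
      have hmax : ‖g (fun j => ((K j : ℤ_[p])))‖ ≤
          max ‖dpow m1 g 0‖ ‖dpow (Function.update m2 i (m2 i + 1)) g 0‖ := by
        rw [hcast, apply_add_single g i]
        exact le_trans (hna _ _) (max_le_max hm1 hm2')
      rcases le_total ‖dpow m1 g 0‖ ‖dpow (Function.update m2 i (m2 i + 1)) g 0‖ with h | h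
      · refine ⟨Function.update m2 i (m2 i + 1), fun j => ?_, by rwa [max_eq_right h] at hmax⟩
        by_cases hj : j = i
        · subst hj
          rw [Function.update_self]
          have := hm2le j
          rw [hK'def, Function.update_self] at this
          omega
        · rw [Function.update_of_ne hj]
          have := hm2le j
          rwa [hK'def, Function.update_of_ne hj] at this
      · refine ⟨m1, fun j => ?_, by rwa [max_eq_left h] at hmax⟩
        have := hm1le j
        by_cases hj : j = i
        · subst hj
          rw [hK'def, Function.update_self] at this
          omega
        · rwa [hK'def, Function.update_of_ne hj] at this

lemma exists_nat_seq (z : Fin d → ℤ_[p]) : ∃ K : ℕ → Fin d → ℕ,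
    Tendsto (fun j => (fun i => ((K j i : ℤ_[p])))) atTop (nhds z) := by
  have h : ∀ (j : ℕ) (i : Fin d), ∃ k : ℕ, dist (z i) ((k : ℤ_[p])) < 1 / (j + 1) := by
    intro j i
    exact PadicInt.denseRange_natCast.exists_dist_lt (z i) (by positivity)
  choose K hK using h
  refine ⟨K, ?_⟩
  rw [tendsto_pi_nhds]
  intro i
  rw [tendsto_iff_dist_tendsto_zero]
  refine squeeze_zero (fun j => dist_nonneg) (fun j => ?_) tendsto_one_div_add_atTop_nhds_zero_nat
  rw [dist_comm]
  exact (hK j i).le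

/-- The key bound: `‖Δ^n f (z)‖ · C ≤ bound` provided all `‖a_{m+n}(f)‖ · C ≤ bound`. -/
lemma key_bound (hna : ∀ a b : M, ‖a + b‖ ≤ max ‖a‖ ‖b‖)
    {f : (Fin d → ℤ_[p]) → M} (hf : Continuous f) (n : Fin d → ℕ) (z : Fin d → ℤ_[p])
    {C bound : ℝ} (hC : 0 ≤ C)
    (hbound : ∀ m : Fin d → ℕ, ‖mahlerCoeff f (m + n)‖ * C ≤ bound) :
    ‖dpow n f z‖ * C ≤ bound := by
  obtain ⟨K, hKt⟩ := exists_nat_seq z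
  have hcont : Continuous (dpow n f) := continuous_dpow n hf
  have htend : Tendsto (fun j => ‖dpow n f (fun i => ((K j i : ℤ_[p])))‖ * C) atTop
      (nhds (‖dpow n f z‖ * C)) :=
    (((hcont.tendsto z).comp hKt).norm).mul_const C
  refine le_of_tendsto' htend fun j => ?_
  obtain ⟨m, _, hm⟩ := norm_apply_natCast_le hna _ (K j) (dpow n f) rfl
  rw [dpow_dpow] at hm
  exact le_trans (mul_le_mul_of_nonneg_right hm hC) (hbound m)

end Bound

/- STATEMENT 8: `C^{λ-an}(ℤ_p^d, M)` is stable under all shifts `sh_z`, `z ∈ ℤ_p^d`,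
and each shift is an isometry for `val_λ` (equivalently for its multiplicative
avatar `Rlam = p^{-val_λ}`). -/
theorem stmt8 {d : ℕ} {M : Type*} [NormedAddCommGroup M]
    (hna : ∀ a b : M, ‖a + b‖ ≤ max ‖a‖ ‖b‖)
    (lam : ℝ) (f : (Fin d → ℤ_[p]) → M) (hf : CondLa p lam f) (z : Fin d → ℤ_[p]) :
    CondLa p lam (fun x => f (z + x)) ∧
      Rlam p lam (fun x => f (z + x)) = Rlam p lam f := by

  obtain ⟨hfc, hft⟩ := hf
  have hp1 : (1 : ℝ) ≤ (p : ℝ) := by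
    exact_mod_cast Nat.one_le_iff_ne_zero.mpr (Fact.out : p.Prime).ne_zero
  have hp0 : (0 : ℝ) < (p : ℝ) := lt_of_lt_of_le one_pos hp1
  have hrnn : (0 : ℝ) ≤ (p : ℝ) ^ lam := Real.rpow_nonneg hp0.le lam
  have hshc : Continuous (fun x => f (z + x)) := hfc.comp (continuous_const.add continuous_id)
  -- the `≤` half for `Rlam`, for any continuous function and any shift
  have Rle : ∀ (g : (Fin d → ℤ_[p]) → M), Continuous g → ∀ w : Fin d → ℤ_[p],
      Rlam p lam (fun x => g (w + x)) ≤ Rlam p lam g := by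
    intro g hg w
    refine iSup_le fun n => ?_
    rw [mahlerCoeff_shift]
    obtain ⟨K, hKt⟩ := exists_nat_seq w
    have hcont : Continuous (dpow n g) := continuous_dpow n hg
    have htend : Tendsto (fun j => ENNReal.ofReal
        (‖dpow n g (fun i => ((K j i : ℤ_[p])))‖ *
          (p : ℝ) ^ ((∑ i, ⌊(p : ℝ) ^ lam * (n i : ℝ)⌋) : ℤ))) atTop
        (nhds (ENNReal.ofReal (‖dpow n g w‖ *
          (p : ℝ) ^ ((∑ i, ⌊(p : ℝ) ^ lam * (n i : ℝ)⌋) : ℤ)))) :=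
      (ENNReal.continuous_ofReal.tendsto _).comp
        ((((hcont.tendsto w).comp hKt).norm).mul_const _)
    refine le_of_tendsto' htend fun j => ?_
    obtain ⟨m, _, hm⟩ := norm_apply_natCast_le hna _ (K j) (dpow n g) rfl
    rw [dpow_dpow] at hm
    have hzle : ((∑ i, ⌊(p : ℝ) ^ lam * (n i : ℝ)⌋) : ℤ) ≤
        ((∑ i, ⌊(p : ℝ) ^ lam * (((m + n) i : ℕ) : ℝ)⌋) : ℤ) := by
      refine Finset.sum_le_sum fun i _ => Int.floor_le_floor ?_
      refine mul_le_mul_of_nonneg_left ?_ hrnn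
      exact_mod_cast Nat.le_add_left (n i) (m i)
    have hD : (p : ℝ) ^ ((∑ i, ⌊(p : ℝ) ^ lam * (n i : ℝ)⌋) : ℤ) ≤
        (p : ℝ) ^ ((∑ i, ⌊(p : ℝ) ^ lam * (((m + n) i : ℕ) : ℝ)⌋) : ℤ) :=
      zpow_le_zpow_right₀ hp1 hzle
    calc ENNReal.ofReal (‖dpow n g (fun i => ((K j i : ℤ_[p])))‖ *
          (p : ℝ) ^ ((∑ i, ⌊(p : ℝ) ^ lam * (n i : ℝ)⌋) : ℤ))
        ≤ ENNReal.ofReal (‖mahlerCoeff g (m + n)‖ *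
          (p : ℝ) ^ ((∑ i, ⌊(p : ℝ) ^ lam * (((m + n) i : ℕ) : ℝ)⌋) : ℤ)) := by
          refine ENNReal.ofReal_le_ofReal ?_
          exact mul_le_mul hm hD (zpow_nonneg hp0.le _) (norm_nonneg _)
      _ ≤ Rlam p lam g := le_iSup (fun n : Fin d → ℕ => ENNReal.ofReal (‖mahlerCoeff g n‖ *
          (p : ℝ) ^ ((∑ i, ⌊(p : ℝ) ^ lam * (n i : ℝ)⌋) : ℤ))) (m + n)
  constructor
  · refine ⟨hshc, ?_⟩
    rw [NormedAddCommGroup.tendsto_nhds_zero]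
    intro ε hε
    have hb := NormedAddCommGroup.tendsto_nhds_zero.mp hft (ε / 2) (by positivity)
    rw [Filter.eventually_cofinite] at hb
    have hbox : ∀ m : Fin d → ℕ, ({n : Fin d → ℕ | ∀ i, n i ≤ m i}).Finite := fun m =>
      (Set.Finite.pi fun i => Set.finite_Iic (m i)).subset
        (fun n hn => by simpa [Set.mem_univ_pi, Pi.le_def] using hn)
    have hS : (⋃ m ∈ {m : Fin d → ℕ | ¬ ‖‖mahlerCoeff f m‖ *
        (p : ℝ) ^ ((p : ℝ) ^ lam * (∑ i, (m i : ℝ)))‖ < ε / 2},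
        {n : Fin d → ℕ | ∀ i, n i ≤ m i}).Finite :=
      hb.biUnion fun m _ => hbox m
    rw [Filter.eventually_cofinite]
    refine hS.subset fun n hn => ?_
    by_contra hnS
    apply hn
    have hCpos : (0 : ℝ) < (p : ℝ) ^ ((p : ℝ) ^ lam * (∑ i, (n i : ℝ))) :=
      Real.rpow_pos_of_pos hp0 _
    rw [mahlerCoeff_shift, Real.norm_eq_abs,
      abs_of_nonneg (mul_nonneg (norm_nonneg _) hCpos.le)]
    have hkey : ‖dpow n f z‖ * (p : ℝ) ^ ((p : ℝ) ^ lam * (∑ i, (n i : ℝ))) ≤ ε / 2 := by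
      refine key_bound hna hfc n z hCpos.le fun m => ?_
      have hCle : (p : ℝ) ^ ((p : ℝ) ^ lam * (∑ i, (n i : ℝ))) ≤
          (p : ℝ) ^ ((p : ℝ) ^ lam * (∑ i, (((m + n) i : ℕ) : ℝ))) := by
        refine Real.rpow_le_rpow_of_exponent_le hp1 ?_
        refine mul_le_mul_of_nonneg_left (Finset.sum_le_sum fun i _ => ?_) hrnn
        exact_mod_cast Nat.le_add_left (n i) (m i)
      have h1 : ‖mahlerCoeff f (m + n)‖ * (p : ℝ) ^ ((p : ℝ) ^ lam * (∑ i, (n i : ℝ))) ≤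
          ‖mahlerCoeff f (m + n)‖ * (p : ℝ) ^ ((p : ℝ) ^ lam * (∑ i, (((m + n) i : ℕ) : ℝ))) :=
        mul_le_mul_of_nonneg_left hCle (norm_nonneg _)
      have h2 : ‖mahlerCoeff f (m + n)‖ *
          (p : ℝ) ^ ((p : ℝ) ^ lam * (∑ i, (((m + n) i : ℕ) : ℝ))) ≤ ε / 2 := by
        by_cases hmem : ‖‖mahlerCoeff f (m + n)‖ *
            (p : ℝ) ^ ((p : ℝ) ^ lam * (∑ i, (((m + n) i : ℕ) : ℝ)))‖ < ε / 2
        · calc ‖mahlerCoeff f (m + n)‖ *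
              (p : ℝ) ^ ((p : ℝ) ^ lam * (∑ i, (((m + n) i : ℕ) : ℝ)))
              ≤ ‖‖mahlerCoeff f (m + n)‖ *
                (p : ℝ) ^ ((p : ℝ) ^ lam * (∑ i, (((m + n) i : ℕ) : ℝ)))‖ := le_abs_self _
            _ ≤ ε / 2 := hmem.le
        · exfalso
          exact hnS (Set.mem_biUnion hmem fun i => Nat.le_add_left (n i) (m i))
      exact le_trans h1 h2
    calc ‖dpow n f z‖ * (p : ℝ) ^ ((p : ℝ) ^ lam * (∑ i, (n i : ℝ))) ≤ ε / 2 := hkey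
      _ < ε := by linarith
  · refine le_antisymm (Rle f hfc z) ?_
    have h2 := Rle (fun y => f (z + y)) hshc (-z)
    have heq : (fun x => (fun y => f (z + y)) (-z + x)) = f := by
      funext x
      simp
    rwa [heq] at h2
end

section
/- Sharp elements that are Galois-smooth tilt to locally analytic elements: let K̂_∞ be a perfectoid field of characteristic 0 with a continuous isometric action of Γ ≅ Z_p, and x ∈ K̂_∞^{♭,+} an element of the tilt with x^♯ fixed by a topological generator γ of Γ. Then for all m ≥ 0, val(γ^{p^m}(x) − x) ≥ p^m · val(p); in particular x is a locally analytic (super-Hölder) vector. -/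
/- STATEMENT 13: sharp elements that are Galois-smooth tilt to locally analytic elements.
K plays the role of K̂_∞ (characteristic 0) and L the role of its tilt K̂_∞^♭
(characteristic p, perfect); `sharp : L →*₀ K` is the multiplicative sharp map, which
preserves valuations and is additive modulo p on integral elements.  The group Γ ≅ ℤ_p
acts compatibly on both sides by valuation-preserving automorphisms, continuously in the
ℤ_p-variable, with topological generator γ = act 1.  If x is integral in the tilt and
x^♯ is fixed by γ, then val(γ^{p^m}(x) - x) ≥ p^m·val(p) for all m ≥ 0; multiplicatively
(with ℝ≥0-valued valuations) this reads v_L(γ^{p^m}(x) - x) ≤ v_K(p)^{p^m}. -/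

open scoped NNReal

variable {p : ℕ} [Fact p.Prime]

theorem stmt13 {K L : Type*} [Field K] [Field L] [CharP L p]
    [TopologicalSpace K] [T2Space K]
    (vK : Valuation K ℝ≥0) (vL : Valuation L ℝ≥0)
    (actK : ℤ_[p] → K ≃+* K) (actL : ℤ_[p] → L ≃+* L)
    (hK0 : actK 0 = RingEquiv.refl K)
    (hKadd : ∀ a b : ℤ_[p], actK (a + b) = (actK a).trans (actK b))
    (hL0 : actL 0 = RingEquiv.refl L)
    (hLadd : ∀ a b : ℤ_[p], actL (a + b) = (actL a).trans (actL b))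
    (hKcont : ∀ y : K, Continuous fun a : ℤ_[p] => actK a y)
    (hvK : ∀ (a : ℤ_[p]) (y : K), vK (actK a y) = vK y)
    (hvL : ∀ (a : ℤ_[p]) (y : L), vL (actL a y) = vL y)
    (sharp : L →*₀ K)
    (hsharp_val : ∀ y : L, vK (sharp y) = vL y)
    (hsharp_equiv : ∀ (a : ℤ_[p]) (y : L), sharp (actL a y) = actK a (sharp y))
    (hsharp_mod : ∀ a b : L, vL a ≤ 1 → vL b ≤ 1 →
      vK (sharp (a - b) - (sharp a - sharp b)) ≤ vK (p : K))
    (hperf : ∀ y : L, ∃ z : L, z ^ p = y)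
    (x : L) (hx : vL x ≤ 1)
    (hfix : actK 1 (sharp x) = sharp x) :
    ∀ m : ℕ, vL (actL ((p : ℤ_[p]) ^ m) x - x) ≤ vK (p : K) ^ (p ^ m) := by
  classical
  have hp : p.Prime := Fact.out
  have hKadd' : ∀ (a b : ℤ_[p]) (y : K), actK (a + b) y = actK b (actK a y) := by
    intro a b y; rw [hKadd]; rfl
  have hK0' : ∀ y : K, actK 0 y = y := fun y => by rw [hK0]; rfl
  set u := sharp x with hu
  have hfixN : ∀ n : ℕ, actK (n : ℤ_[p]) u = u := by
    intro n
    induction n with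
    | zero => simpa using hK0' u
    | succ k ih =>
      have hc : ((k + 1 : ℕ) : ℤ_[p]) = (k : ℤ_[p]) + 1 := by push_cast; ring
      rw [hc, hKadd', ih, hfix]
  have hfixAll : ∀ a : ℤ_[p], actK a u = u := by
    have hclosed : IsClosed {a : ℤ_[p] | actK a u = u} :=
      isClosed_eq (hKcont u) continuous_const
    have hsub : Set.range (Nat.cast : ℕ → ℤ_[p]) ⊆ {a | actK a u = u} := by
      rintro _ ⟨n, rfl⟩; exact hfixN n
    intro a
    have h1 : a ∈ closure (Set.range (Nat.cast : ℕ → ℤ_[p])) :=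
      PadicInt.denseRange_natCast a
    have h2 := closure_mono hsub h1
    rwa [hclosed.closure_eq] at h2
  intro m
  -- extract a p^m-th root of x
  obtain ⟨z, hz⟩ : ∃ z : L, z ^ p ^ m = x := by
    induction m with
    | zero => exact ⟨x, by simp⟩
    | succ k ih =>
      obtain ⟨z, hzz⟩ := ih
      obtain ⟨z', hz'⟩ := hperf z
      exact ⟨z', by rw [show p ^ (k + 1) = p * p ^ k from by ring, pow_mul, hz', hzz]⟩
  have hz1 : vL z ≤ 1 := by
    by_contra hcon
    push_neg at hcon
    have h2 : (1 : ℝ≥0) < vL x := by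
      rw [← hz, map_pow]
      exact one_lt_pow₀ hcon (pow_ne_zero m hp.ne_zero)
    exact absurd hx (not_le.mpr h2)
  set w := sharp z with hwdef
  have hw : w ^ p ^ m = u := by rw [hwdef, ← map_pow, hz]
  have hroot : ∀ a : ℤ_[p], actK a w ^ p ^ m = u := by
    intro a; rw [← map_pow, hw, hfixAll]
  -- the subgroup of a ∈ ℤ_p fixing w
  have hfix_add : ∀ a b : ℤ_[p], actK a w = w → actK b w = w → actK (a + b) w = w := by
    intro a b ha hb; rw [hKadd', ha, hb]
  have hfix_neg : ∀ a : ℤ_[p], actK a w = w → actK (-a) w = w := by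
    intro a ha
    have h2 := hKadd' a (-a) w
    rw [add_neg_cancel, hK0', ha] at h2
    exact h2.symm
  set G : AddSubgroup ℤ_[p] :=
    { carrier := {a : ℤ_[p] | actK a w = w}
      add_mem' := fun ha hb => hfix_add _ _ ha hb
      zero_mem' := hK0' w
      neg_mem' := fun ha => hfix_neg _ ha } with hGdef
  have hGmem : ∀ a : ℤ_[p], a ∈ G ↔ actK a w = w := fun a => Iff.rfl
  -- openness of the stabilizer
  set q : Polynomial K := Polynomial.X ^ p ^ m - Polynomial.C u with hqdef
  have hq0 : q ≠ 0 := Polynomial.X_pow_sub_C_ne_zero (pow_pos hp.pos m) u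
  have hVfin : {y : K | y ^ p ^ m = u}.Finite := by
    apply Set.Finite.subset (Polynomial.finite_setOf_isRoot hq0)
    intro y hy
    simp only [Set.mem_setOf_eq] at hy ⊢
    simp [hqdef, Polynomial.IsRoot, sub_eq_zero, hy]
  have hopen : IsOpen {a : ℤ_[p] | actK a w = w} := by
    have heq : {a : ℤ_[p] | actK a w = w}
        = (fun a : ℤ_[p] => actK a w) ⁻¹' (({y : K | y ^ p ^ m = u} \ {w})ᶜ) := by
      ext a
      simp only [Set.mem_setOf_eq, Set.mem_preimage, Set.mem_compl_iff, Set.mem_diff,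
        Set.mem_singleton_iff, not_and, not_not]
      exact ⟨fun h _ => h, fun h => h (hroot a)⟩
    rw [heq]
    exact (hKcont w).isOpen_preimage _
      ((hVfin.subset Set.diff_subset).isClosed.isOpen_compl)
  have h0mem : (0 : ℤ_[p]) ∈ {a : ℤ_[p] | actK a w = w} := hK0' w
  obtain ⟨ε, hε, hball⟩ := Metric.isOpen_iff.mp hopen 0 h0mem
  have hp1 : (1 : ℝ) < p := by exact_mod_cast hp.one_lt
  have hpinv : ((p : ℝ))⁻¹ < 1 := inv_lt_one_of_one_lt₀ hp1
  obtain ⟨N1, hN1⟩ := exists_pow_lt_of_lt_one hε hpinv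
  set N := max N1 (m + 1) with hNdef
  have hNball : ∀ b : ℤ_[p], actK ((p : ℤ_[p]) ^ N * b) w = w := by
    intro b
    apply hball
    rw [Metric.mem_ball, dist_zero_right]
    have h1 : ‖(p : ℤ_[p]) ^ N * b‖ ≤ ((p : ℝ))⁻¹ ^ N := by
      calc ‖(p : ℤ_[p]) ^ N * b‖ = ‖(p : ℤ_[p]) ^ N‖ * ‖b‖ := norm_mul _ _
        _ ≤ ‖(p : ℤ_[p]) ^ N‖ * 1 := by
            gcongr
            exact PadicInt.norm_le_one b
        _ = ((p : ℝ))⁻¹ ^ N := by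
            rw [mul_one, PadicInt.norm_p_pow, inv_pow]
            rw [zpow_neg, zpow_natCast]
    have h2 : ((p : ℝ))⁻¹ ^ N ≤ ((p : ℝ))⁻¹ ^ N1 :=
      pow_le_pow_of_le_one (by positivity) (le_of_lt hpinv) (le_max_left _ _)
    exact lt_of_le_of_lt (h1.trans h2) hN1
  -- j = least i with actK (p^i) w = w
  have hex : ∃ i : ℕ, actK ((p : ℤ_[p]) ^ i) w = w := by
    refine ⟨N, ?_⟩
    simpa using hNball 1
  have hj : actK ((p : ℤ_[p]) ^ Nat.find hex) w = w := Nat.find_spec hex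
  set j := Nat.find hex with hjdef
  -- key claim: j ≤ m
  have hjle : j ≤ m := by
    by_contra hc
    push_neg at hc
    -- then i ↦ actK i w is injective on range (p^m + 1), giving too many roots of q
    have hfix_d : ∀ i i' : ℕ, i < i' → actK (i : ℤ_[p]) w = actK (i' : ℤ_[p]) w →
        actK ((i' - i : ℕ) : ℤ_[p]) w = w := by
      intro i i' hii heq
      have h1 : ((i' : ℕ) : ℤ_[p]) = ((i' - i : ℕ) : ℤ_[p]) + (i : ℤ_[p]) := by
        push_cast [Nat.cast_sub hii.le]
        ring
      have h2 := hKadd' ((i' - i : ℕ) : ℤ_[p]) (i : ℤ_[p]) w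
      rw [← h1, ← heq] at h2
      exact ((actK (i : ℤ_[p])).injective h2).symm
    have hinj : ∀ i i' : ℕ, i < i' → i' ≤ p ^ m →
        actK (i : ℤ_[p]) w ≠ actK (i' : ℤ_[p]) w := by
      intro i i' hii hile heq
      set d := i' - i with hd
      have hd0 : d ≠ 0 := Nat.sub_ne_zero_of_lt hii
      have hdle : d ≤ p ^ m := le_trans (Nat.sub_le _ _) hile
      have hdfix : actK ((d : ℕ) : ℤ_[p]) w = w := hfix_d i i' hii heq
      set s := d.factorization p with hs
      set t := d / p ^ s with ht
      have hdst : p ^ s * t = d := Nat.ordProj_mul_ordCompl_eq_self d p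
      have hnd : ¬ p ∣ t := Nat.not_dvd_ordCompl hp hd0
      have hsm : s ≤ m := by
        have h3 : p ^ s ≤ p ^ m := le_trans (Nat.le_of_dvd (Nat.pos_of_ne_zero hd0)
          (Nat.ordProj_dvd d p)) hdle
        exact (Nat.pow_le_pow_iff_right hp.one_lt).mp h3
      have hsN : s ≤ N := le_trans hsm (le_trans (Nat.le_succ m) (le_max_right _ _))
      -- Bezout
      have hco : Nat.Coprime t (p ^ (N - s)) :=
        Nat.Coprime.pow_right _ ((Nat.Prime.coprime_iff_not_dvd hp).mpr hnd).symm
      have hgcd : Int.gcd (t : ℤ) ((p : ℤ) ^ (N - s)) = 1 := by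
        have : ((p : ℤ)) ^ (N - s) = ((p ^ (N - s) : ℕ) : ℤ) := by push_cast; ring
        rw [this, Int.gcd_natCast_natCast]
        exact hco
      obtain ⟨α, β, hbez1⟩ : ∃ a b : ℤ, (1 : ℤ) = (t : ℤ) * a + (p : ℤ) ^ (N - s) * b := by
        refine ⟨Int.gcdA (t : ℤ) ((p : ℤ) ^ (N - s)), Int.gcdB (t : ℤ) ((p : ℤ) ^ (N - s)), ?_⟩
        have h4 := Int.gcd_eq_gcd_ab (t : ℤ) ((p : ℤ) ^ (N - s))
        rw [hgcd] at h4
        exact_mod_cast h4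
      have hbez : ((p : ℤ)) ^ s = (d : ℤ) * α + ((p : ℤ)) ^ N * β := by
        have h5 : ((p : ℤ)) ^ s * ((t : ℤ) * α + (p : ℤ) ^ (N - s) * β)
            = (d : ℤ) * α + ((p : ℤ)) ^ N * β := by
          have h6 : ((p : ℤ)) ^ s * (t : ℤ) = (d : ℤ) := by exact_mod_cast hdst
          have h7 : ((p : ℤ)) ^ s * ((p : ℤ)) ^ (N - s) = ((p : ℤ)) ^ N := by
            rw [← pow_add]
            congr 1
            omega
          calc ((p : ℤ)) ^ s * ((t : ℤ) * α + (p : ℤ) ^ (N - s) * β)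
              = ((p : ℤ) ^ s * (t : ℤ)) * α + ((p : ℤ) ^ s * (p : ℤ) ^ (N - s)) * β := by
                ring
            _ = (d : ℤ) * α + ((p : ℤ)) ^ N * β := by rw [h6, h7]
        calc ((p : ℤ)) ^ s = ((p : ℤ)) ^ s * 1 := by ring
          _ = ((p : ℤ)) ^ s * ((t : ℤ) * α + (p : ℤ) ^ (N - s) * β) := by rw [← hbez1]
          _ = (d : ℤ) * α + ((p : ℤ)) ^ N * β := h5
      -- transfer to ℤ_p and conclude actK (p^s) w = w
      have hm1 : (d : ℤ_[p]) * (α : ℤ_[p]) ∈ G := by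
        have h8 : (d : ℤ_[p]) ∈ G := hdfix
        have h9 := G.zsmul_mem h8 α
        rwa [zsmul_eq_mul, mul_comm] at h9
      have hm2 : (p : ℤ_[p]) ^ N * (β : ℤ_[p]) ∈ G := hNball (β : ℤ_[p])
      have hcast : ((p : ℤ_[p])) ^ s = (d : ℤ_[p]) * (α : ℤ_[p]) + (p : ℤ_[p]) ^ N * (β : ℤ_[p]) := by
        have := congrArg (fun n : ℤ => (n : ℤ_[p])) hbez
        push_cast at this
        exact_mod_cast this
      have hmem : ((p : ℤ_[p])) ^ s ∈ G := by
        rw [hcast]; exact G.add_mem hm1 hm2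
      have hlt : s < j := lt_of_le_of_lt hsm hc
      exact Nat.find_min hex hlt hmem
    -- count roots
    have hsub2 : ∀ i ∈ Finset.range (p ^ m + 1), actK ((i : ℕ) : ℤ_[p]) w ∈ q.roots.toFinset := by
      intro i _
      rw [Multiset.mem_toFinset, Polynomial.mem_roots hq0]
      simp [hqdef, Polynomial.IsRoot, sub_eq_zero, hroot]
    have hcard : (Finset.range (p ^ m + 1)).card ≤ q.roots.toFinset.card := by
      apply Finset.card_le_card_of_injOn (fun i : ℕ => actK ((i : ℕ) : ℤ_[p]) w) hsub2
      intro i hi i' hi' heq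
      by_contra hne
      rcases Nat.lt_or_ge i i' with h | h
      · exact hinj i i' h (by simpa [Nat.lt_succ_iff] using Finset.mem_range.mp hi') heq
      · have h' : i' < i := lt_of_le_of_ne h (Ne.symm hne)
        exact hinj i' i h' (by simpa [Nat.lt_succ_iff] using Finset.mem_range.mp hi) heq.symm
    have hfin : p ^ m + 1 ≤ p ^ m := by
      calc p ^ m + 1 = (Finset.range (p ^ m + 1)).card := (Finset.card_range _).symm
        _ ≤ q.roots.toFinset.card := hcard
        _ ≤ Multiset.card q.roots := Multiset.toFinset_card_le _
        _ ≤ q.natDegree := q.card_roots'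
        _ = p ^ m := by rw [hqdef, Polynomial.natDegree_X_pow_sub_C]
    omega
  -- hence actK (p^m) w = w
  have hwfix : actK ((p : ℤ_[p]) ^ m) w = w := by
    have h1 : ((p : ℤ_[p]) ^ j) ∈ G := hj
    have h2 := G.zsmul_mem h1 ((p ^ (m - j) : ℕ) : ℤ)
    have h3 : ((p ^ (m - j) : ℕ) : ℤ) • ((p : ℤ_[p]) ^ j) = (p : ℤ_[p]) ^ m := by
      rw [zsmul_eq_mul]
      push_cast
      rw [← pow_add]
      congr 1
      omega
    rwa [h3] at h2
  -- now the sharp-mod-p estimate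
  have hz1' : vL (actL ((p : ℤ_[p]) ^ m) z) ≤ 1 := by rw [hvL]; exact hz1
  have hps : sharp (actL ((p : ℤ_[p]) ^ m) z) = w := by
    rw [hsharp_equiv, ← hwdef, hwfix]
  have hkey : vL (actL ((p : ℤ_[p]) ^ m) z - z) ≤ vK (p : K) := by
    have h1 := hsharp_mod (actL ((p : ℤ_[p]) ^ m) z) z hz1' hz1
    rw [hps, ← hwdef, sub_self, sub_zero] at h1
    rwa [hsharp_val] at h1
  have hxact : actL ((p : ℤ_[p]) ^ m) x - x = (actL ((p : ℤ_[p]) ^ m) z - z) ^ p ^ m := by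
    rw [← hz, map_pow, ← sub_pow_char_pow]
  calc vL (actL ((p : ℤ_[p]) ^ m) x - x) = vL (actL ((p : ℤ_[p]) ^ m) z - z) ^ p ^ m := by
        rw [hxact, map_pow]
    _ ≤ vK (p : K) ^ p ^ m := pow_le_pow_left₀ zero_le' hkey _
end

section
/- For a ∈ 1 + pZ_p acting on F = the fraction field completion of Z_p[[T]] by (a·f)(T) = f((1+T)^a − 1), and for any k ∈ Z, one has val((a−1)(T^k)) ≥ val(T^k) + c for a positive constant c = min(val(p), val(T)); i.e., (a−1)(T^k) = T^k · ((a + Σ_{m≥1} binom(a, m+1) T^m)^k − 1) and the second factor has positive valuation. -/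
/- STATEMENT 18: for a ∈ 1 + pℤ_p acting on the fraction field of completed power
series by f(T) ↦ f((1+T)^a - 1), and any k ∈ ℤ,
val((a-1)(T^k)) ≥ val(T^k) + min(val p, val T).  We work in Laurent series over ℚ_p;
(1+T)^a = Σ_m binom(a,m) T^m, so (a-1)(T^k) = ((1+T)^a - 1)^k - T^k.  The valuation
is encoded multiplicatively by V_ρ(Σ c_i T^i) = sup_i ‖c_i‖·ρ^i with 0 < ρ < 1
(ρ = p^{-val T}); the claimed bound reads
V_ρ(((1+T)^a - 1)^k - T^k) ≤ max(ρ, p^{-1}) · V_ρ(T^k). -/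

open scoped ENNReal NNReal

variable {p : ℕ} [Fact p.Prime]

/-- `binom(a, n) ∈ ℚ_p` for `a ∈ ℤ_p`. -/
noncomputable def qchoose (a : ℤ_[p]) (n : ℕ) : ℚ_[p] :=
  (∏ i ∈ Finset.range n, ((a : ℚ_[p]) - (i : ℚ_[p]))) / (n.factorial : ℚ_[p])

/-- The binomial series `(1+T)^a = Σ_m binom(a,m) T^m` as a Laurent series. -/
noncomputable def binomSeries (a : ℤ_[p]) : LaurentSeries ℚ_[p] :=
  HahnSeries.ofPowerSeries ℤ ℚ_[p] (PowerSeries.mk fun m => qchoose a m)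

/-- The variable `T` as a Laurent series. -/
noncomputable def Tvar (p : ℕ) [Fact p.Prime] : LaurentSeries ℚ_[p] :=
  HahnSeries.single 1 1

/-- The multiplicative avatar `V_ρ(f) = sup_i ‖f_i‖ ρ^i` of the valuation
`val(Σ c_i T^i) = inf_i (val_p(c_i) + i·val(T))`, with `ρ = p^{-val T}`. -/
noncomputable def Vval (ρ : ℝ≥0∞) (f : LaurentSeries ℚ_[p]) : ℝ≥0∞ :=
  ⨆ i : ℤ, (‖f.coeff i‖₊ : ℝ≥0∞) * ρ ^ i

/-! ### Auxiliary lemmas -/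

lemma prod_sub_eq_descPochhammer (x : ℚ_[p]) (n : ℕ) :
    ∏ i ∈ Finset.range n, (x - (i : ℚ_[p])) = (descPochhammer ℚ_[p] n).eval x := by
  induction n with
  | zero => simp
  | succ n ih => rw [Finset.prod_range_succ, ih, descPochhammer_succ_right]; simp

lemma qchoose_natCast (m n : ℕ) : qchoose ((m : ℤ_[p])) n = (m.choose n : ℚ_[p]) := by
  unfold qchoose
  have h0 : (((m : ℤ_[p]) : ℚ_[p])) = (m : ℚ_[p]) := by push_cast; ring
  rw [h0, prod_sub_eq_descPochhammer, descPochhammer_eval_eq_descFactorial,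
    Nat.descFactorial_eq_factorial_mul_choose]
  push_cast
  rw [mul_comm, mul_div_assoc, div_self (by exact_mod_cast n.factorial_ne_zero), mul_one]

lemma norm_qchoose_le (a : ℤ_[p]) (n : ℕ) : ‖qchoose a n‖ ≤ 1 := by
  have hc : Continuous fun b : ℤ_[p] => qchoose b n := by
    unfold qchoose
    exact ((continuous_finset_prod _ fun i _ =>
      (continuous_subtype_val.sub continuous_const)).div_const _)
  have hclosed : IsClosed {b : ℤ_[p] | ‖qchoose b n‖ ≤ 1} :=
    isClosed_le (hc.norm) continuous_const
  have hsub : Set.range (Nat.cast : ℕ → ℤ_[p]) ⊆ {b | ‖qchoose b n‖ ≤ 1} := by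
    rintro _ ⟨m, rfl⟩
    rw [Set.mem_setOf_eq, qchoose_natCast]
    have : ((m.choose n : ℚ_[p])) = ((m.choose n : ℤ) : ℚ_[p]) := by push_cast; ring
    rw [this]
    exact Padic.norm_int_le_one _
  have hmem : a ∈ closure (Set.range (Nat.cast : ℕ → ℤ_[p])) := by
    rw [PadicInt.denseRange_natCast.closure_eq]; trivial
  exact hclosed.closure_subset_iff.mpr hsub hmem

lemma qchoose_zero (a : ℤ_[p]) : qchoose a 0 = 1 := by simp [qchoose]

lemma qchoose_one (a : ℤ_[p]) : qchoose a 1 = (a : ℚ_[p]) := by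
  simp [qchoose]

/-- The power series `w` with `(1+T)^a - 1 = T·w`, over `ℤ_p`. -/
noncomputable def wps (a : ℤ_[p]) : PowerSeries ℤ_[p] :=
  PowerSeries.mk fun m => ⟨qchoose a (m + 1), norm_qchoose_le a (m + 1)⟩

lemma constantCoeff_wps (a : ℤ_[p]) :
    PowerSeries.constantCoeff (R := ℤ_[p]) (wps a) = a := by
  apply Subtype.ext
  show qchoose a 1 = (a : ℚ_[p])
  exact qchoose_one a

/-- The coefficient-embedding ring hom `ℤ_p⟦T⟧ → ℚ_p((T))`. -/
noncomputable def phi (p : ℕ) [Fact p.Prime] : PowerSeries ℤ_[p] →+* LaurentSeries ℚ_[p] :=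
  (HahnSeries.ofPowerSeries ℤ ℚ_[p]).comp (PowerSeries.map (PadicInt.Coe.ringHom))

lemma phi_coeff_neg (f : PowerSeries ℤ_[p]) {i : ℤ} (hi : i < 0) :
    (phi p f).coeff i = 0 := by
  show ((HahnSeries.ofPowerSeries ℤ ℚ_[p]) _).coeff i = 0
  rw [HahnSeries.ofPowerSeries_apply, HahnSeries.embDomain_notin_range]
  rintro ⟨n, h⟩
  have : ((n : ℤ)) = i := h
  omega

lemma phi_coeff_natCast (f : PowerSeries ℤ_[p]) (n : ℕ) :
    (phi p f).coeff (n : ℤ) = ((PowerSeries.coeff (R := ℤ_[p]) n f : ℤ_[p]) : ℚ_[p]) := by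
  show ((HahnSeries.ofPowerSeries ℤ ℚ_[p]) _).coeff _ = _
  rw [HahnSeries.ofPowerSeries_apply_coeff]
  simp only [PowerSeries.coeff_map]
  rfl

lemma phi_zpow (u : (PowerSeries ℤ_[p])ˣ) (k : ℤ) :
    ((phi p u : LaurentSeries ℚ_[p])) ^ k
      = phi p ((u ^ k : (PowerSeries ℤ_[p])ˣ) : PowerSeries ℤ_[p]) := by
  have h1 : (phi p u : LaurentSeries ℚ_[p])
      = ((Units.map (phi p).toMonoidHom u : (LaurentSeries ℚ_[p])ˣ) : LaurentSeries ℚ_[p]) := rfl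
  rw [h1, ← Units.val_zpow_eq_zpow_val, ← map_zpow (Units.map (phi p).toMonoidHom) u k]
  rfl

lemma key_factor (a : ℤ_[p]) : binomSeries a - 1 = Tvar p * phi p (wps a) := by
  have hX : (PowerSeries.mk fun m => qchoose a m) - 1
      = PowerSeries.X * (PowerSeries.map (PadicInt.Coe.ringHom) (wps a)) := by
    ext n
    cases n with
    | zero =>
        simp [PowerSeries.coeff_zero_X_mul, qchoose_zero]
    | succ n =>
        rw [PowerSeries.coeff_succ_X_mul]
        simp only [PowerSeries.coeff_mk, PowerSeries.coeff_map, map_sub, PowerSeries.coeff_one,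
          Nat.succ_ne_zero, if_false, sub_zero, wps]
        exact (congrArg Subtype.val (PowerSeries.coeff_mk (R := ℤ_[p]) n
          (fun m => ⟨qchoose a (m + 1), norm_qchoose_le a (m + 1)⟩))).symm
  have : binomSeries a - 1
      = (HahnSeries.ofPowerSeries ℤ ℚ_[p]) ((PowerSeries.mk fun m => qchoose a m) - 1) := by
    rw [map_sub, map_one]; rfl
  rw [this, hX, map_mul, HahnSeries.ofPowerSeries_X]
  rfl

lemma norm_zpow_sub_one (α : ℤ_[p]ˣ) (hα : ‖(α : ℤ_[p]) - 1‖ ≤ (p : ℝ)⁻¹) (k : ℤ) :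
    ‖((α ^ k : ℤ_[p]ˣ) : ℤ_[p]) - 1‖ ≤ (p : ℝ)⁻¹ := by
  have hnat : ∀ n : ℕ, ‖((α : ℤ_[p])) ^ n - 1‖ ≤ (p : ℝ)⁻¹ := by
    intro n
    induction n with
    | zero => simp
    | succ n ih =>
        have hsplit : (α : ℤ_[p]) ^ (n + 1) - 1
            = (α : ℤ_[p]) ^ n * ((α : ℤ_[p]) - 1) + ((α : ℤ_[p]) ^ n - 1) := by ring
        rw [hsplit]
        refine le_trans (PadicInt.nonarchimedean _ _) (max_le ?_ ih)
        calc ‖(α : ℤ_[p]) ^ n * ((α : ℤ_[p]) - 1)‖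
            = ‖(α : ℤ_[p]) ^ n‖ * ‖(α : ℤ_[p]) - 1‖ := norm_mul _ _
          _ ≤ 1 * (p : ℝ)⁻¹ :=
              mul_le_mul (PadicInt.norm_le_one _) hα (norm_nonneg _) zero_le_one
          _ = (p : ℝ)⁻¹ := one_mul _
  cases k with
  | ofNat n =>
      have : ((α ^ (Int.ofNat n) : ℤ_[p]ˣ) : ℤ_[p]) = (α : ℤ_[p]) ^ n := by
        rw [Int.ofNat_eq_coe, zpow_natCast]; rfl
      rw [this]; exact hnat n
  | negSucc n =>
      have hmul : (α ^ (Int.negSucc n)) * α ^ (n + 1) = 1 := by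
        rw [zpow_negSucc]; exact inv_mul_cancel _
      have hmul' : ((α ^ (Int.negSucc n) : ℤ_[p]ˣ) : ℤ_[p]) * (α : ℤ_[p]) ^ (n + 1) = 1 := by
        have := congrArg (Units.val) hmul
        rw [← Units.val_pow_eq_pow_val, ← Units.val_mul, hmul, Units.val_one]
      have key : ((α ^ (Int.negSucc n) : ℤ_[p]ˣ) : ℤ_[p]) - 1
          = ((α ^ (Int.negSucc n) : ℤ_[p]ˣ) : ℤ_[p]) * (1 - (α : ℤ_[p]) ^ (n + 1)) := by
        rw [mul_sub, mul_one, hmul']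
      rw [key, norm_mul, PadicInt.norm_units, one_mul, norm_sub_rev]
      exact hnat (n + 1)

lemma isUnit_of_one_add (a b : ℤ_[p]) (hab : a = 1 + p * b) : IsUnit a := by
  rw [PadicInt.isUnit_iff]
  have hp1 : (1 : ℝ) < p := by
    exact_mod_cast (Fact.out : p.Prime).one_lt
  have hpb : ‖(p : ℤ_[p]) * b‖ < 1 := by
    calc ‖(p : ℤ_[p]) * b‖ = ‖(p : ℤ_[p])‖ * ‖b‖ := norm_mul _ _
      _ ≤ (p : ℝ)⁻¹ * 1 := by
          refine mul_le_mul (le_of_eq PadicInt.norm_p) (PadicInt.norm_le_one _)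
            (norm_nonneg _) (by positivity)
      _ < 1 := by rw [mul_one]; exact inv_lt_one_of_one_lt₀ hp1
  have hle : ‖a‖ ≤ 1 := PadicInt.norm_le_one _
  rcases lt_or_eq_of_le hle with hlt | heq
  · exfalso
    have h1 : (1 : ℝ) = ‖(1 : ℤ_[p])‖ := (norm_one).symm
    have : (1 : ℝ) ≤ max ‖a‖ ‖(p : ℤ_[p]) * b‖ := by
      rw [h1]
      have : (1 : ℤ_[p]) = a + (-((p : ℤ_[p]) * b)) := by rw [hab]; ring
      rw [this]
      refine le_trans (PadicInt.nonarchimedean _ _) ?_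
      rw [norm_neg]
    rcases max_cases ‖a‖ ‖(p : ℤ_[p]) * b‖ with ⟨h, _⟩ | ⟨h, _⟩ <;> rw [h] at this <;> linarith
  · exact heq

theorem stmt18 (a : ℤ_[p]) (ha : ∃ b : ℤ_[p], a = 1 + p * b)
    (ρ : ℝ≥0∞) (hρ0 : 0 < ρ) (hρ1 : ρ < 1) (k : ℤ) :
    Vval ρ ((binomSeries a - 1) ^ k - Tvar p ^ k) ≤
      max ρ (((p : ℝ≥0∞))⁻¹) * Vval ρ (Tvar p ^ k) := by
  obtain ⟨b, hab⟩ := ha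
  have hρt : ρ ≠ ⊤ := hρ1.ne_top
  have hρ0' : ρ ≠ 0 := hρ0.ne'
  have hpprime : p.Prime := Fact.out
  -- the unit w
  have hwunit : IsUnit (wps a) := by
    rw [PowerSeries.isUnit_iff_constantCoeff, constantCoeff_wps]
    exact isUnit_of_one_add a b hab
  set W : (PowerSeries ℤ_[p])ˣ := hwunit.unit with hW
  have hWval : (W : PowerSeries ℤ_[p]) = wps a := hwunit.unit_spec
  set α : ℤ_[p]ˣ := Units.map (PowerSeries.constantCoeff (R := ℤ_[p])).toMonoidHom W with hα
  have hαval : (α : ℤ_[p]) = a := by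
    rw [hα]
    show PowerSeries.constantCoeff (R := ℤ_[p]) (W : PowerSeries ℤ_[p]) = a
    rw [hWval, constantCoeff_wps]
  -- the remainder power series h = w^k - 1
  set h : PowerSeries ℤ_[p] := ((W ^ k : (PowerSeries ℤ_[p])ˣ) : PowerSeries ℤ_[p]) - 1 with hh
  have hconst : PowerSeries.constantCoeff (R := ℤ_[p]) h = ((α ^ k : ℤ_[p]ˣ) : ℤ_[p]) - 1 := by
    rw [hh, map_sub, map_one]
    congr 1
    have h1 : PowerSeries.constantCoeff (R := ℤ_[p]) ((W ^ k : (PowerSeries ℤ_[p])ˣ) : PowerSeries ℤ_[p])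
        = ((Units.map (PowerSeries.constantCoeff (R := ℤ_[p])).toMonoidHom (W ^ k) : ℤ_[p]ˣ) : ℤ_[p]) :=
      rfl
    rw [h1, map_zpow]
  -- factor the main difference
  have hTne : (Tvar p : LaurentSeries ℚ_[p]) ≠ 0 := HahnSeries.single_ne_zero one_ne_zero
  have hfac : binomSeries a - 1 = Tvar p * phi p (wps a) := key_factor a
  have hdiff : (binomSeries a - 1) ^ k - Tvar p ^ k = Tvar p ^ k * phi p h := by
    rw [hfac, ← hWval, mul_zpow, phi_zpow, hh, map_sub, map_one, mul_sub, mul_one]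
  -- Tvar ^ k = single k 1
  have hpow : ∀ n : ℕ, (Tvar p : LaurentSeries ℚ_[p]) ^ n = HahnSeries.single (n : ℤ) 1 := by
    intro n
    induction n with
    | zero => simp
    | succ n ih =>
        rw [pow_succ, ih]
        show HahnSeries.single (n : ℤ) 1 * HahnSeries.single 1 1 = _
        rw [HahnSeries.single_mul_single, one_mul]
        congr 1
  have hTk : (Tvar p : LaurentSeries ℚ_[p]) ^ k = HahnSeries.single k 1 := by
    cases k with
    | ofNat n => rw [Int.ofNat_eq_coe, zpow_natCast]; exact hpow n
    | negSucc n =>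
        rw [zpow_negSucc, hpow (n + 1)]
        rw [inv_eq_of_mul_eq_one_left
          (a := (HahnSeries.single (Int.negSucc n) 1 : LaurentSeries ℚ_[p]))]
        rw [HahnSeries.single_mul_single, one_mul]
        have : Int.negSucc n + ((n + 1 : ℕ) : ℤ) = 0 := by
          rw [Int.negSucc_eq]; push_cast; ring
        rw [this, HahnSeries.single_zero_one]
  -- Vval of Tvar ^ k
  have hVT : Vval ρ ((Tvar p : LaurentSeries ℚ_[p]) ^ k) = ρ ^ k := by
    rw [hTk]
    unfold Vval
    apply le_antisymm
    · refine iSup_le fun i => ?_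
      rcases eq_or_ne i k with rfl | hik
      · rw [HahnSeries.coeff_single_same, nnnorm_one, ENNReal.coe_one, one_mul]
      · rw [HahnSeries.coeff_single_of_ne hik, nnnorm_zero, ENNReal.coe_zero, zero_mul]
        exact zero_le
    · have := le_iSup
        (fun i : ℤ => ((‖(HahnSeries.single k (1 : ℚ_[p])).coeff i‖₊ : ℝ≥0∞) * ρ ^ i)) k
      simpa [HahnSeries.coeff_single_same] using this
  -- bound on the coefficients of φ h
  have hbound : ∀ j : ℤ, (‖(phi p h).coeff j‖₊ : ℝ≥0∞) * ρ ^ j ≤ max ρ ((p : ℝ≥0∞))⁻¹ := by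
    intro j
    rcases lt_or_ge j 0 with hj | hj
    · rw [phi_coeff_neg _ hj, nnnorm_zero, ENNReal.coe_zero, zero_mul]
      exact zero_le
    · lift j to ℕ using hj with n
      rw [phi_coeff_natCast]
      cases n with
      | zero =>
          have hnorm : ‖((PowerSeries.coeff (R := ℤ_[p]) 0 h : ℤ_[p]) : ℚ_[p])‖ ≤ (p : ℝ)⁻¹ := by
            rw [← PadicInt.norm_def]
            have : PowerSeries.coeff (R := ℤ_[p]) 0 h = PowerSeries.constantCoeff (R := ℤ_[p]) h := by
              simp [PowerSeries.coeff_zero_eq_constantCoeff]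
            rw [this, hconst]
            refine norm_zpow_sub_one α ?_ k
            rw [hαval, hab]
            have : (1 : ℤ_[p]) + (p : ℤ_[p]) * b - 1 = (p : ℤ_[p]) * b := by ring
            rw [this, norm_mul, PadicInt.norm_p]
            calc (p : ℝ)⁻¹ * ‖b‖ ≤ (p : ℝ)⁻¹ * 1 := by
                  exact mul_le_mul_of_nonneg_left (PadicInt.norm_le_one _) (by positivity)
              _ = (p : ℝ)⁻¹ := mul_one _
          refine le_trans ?_ (le_max_right _ _)
          have hcast : ((p : ℝ≥0∞))⁻¹ = ((((p : ℝ≥0))⁻¹ : ℝ≥0) : ℝ≥0∞) := by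
            rw [ENNReal.coe_inv (by exact_mod_cast hpprime.ne_zero), ENNReal.coe_natCast]
          rw [Nat.cast_zero, zpow_zero, mul_one, hcast, ENNReal.coe_le_coe]
          rw [← NNReal.coe_le_coe]
          push_cast
          exact hnorm
      | succ n =>
          have h1 : (‖((PowerSeries.coeff (R := ℤ_[p]) (n + 1) h : ℤ_[p]) : ℚ_[p])‖₊ : ℝ≥0∞) ≤ 1 := by
            rw [ENNReal.coe_le_one_iff, ← NNReal.coe_le_one]
            push_cast
            rw [← PadicInt.norm_def]
            exact PadicInt.norm_le_one _
          have h2 : ρ ^ ((n + 1 : ℕ) : ℤ) ≤ ρ := by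
            rw [zpow_natCast]
            exact pow_le_of_le_one zero_le hρ1.le (Nat.succ_ne_zero n)
          refine le_trans ?_ (le_max_left _ _)
          calc (‖((PowerSeries.coeff (R := ℤ_[p]) (n + 1) h : ℤ_[p]) : ℚ_[p])‖₊ : ℝ≥0∞)
                * ρ ^ ((n + 1 : ℕ) : ℤ)
              ≤ 1 * ρ ^ ((n + 1 : ℕ) : ℤ) := mul_le_mul_left h1 _
            _ = ρ ^ ((n + 1 : ℕ) : ℤ) := one_mul _
            _ ≤ ρ := h2
  -- conclude
  rw [hdiff, hVT, hTk]
  refine le_trans (iSup_le fun i => ?_) (le_of_eq (mul_comm _ _))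
  have hc : (HahnSeries.single k (1 : ℚ_[p]) * phi p h).coeff i = (phi p h).coeff (i - k) := by
    have h1 := HahnSeries.coeff_single_mul_add (r := (1 : ℚ_[p])) (x := phi p h)
      (a := i - k) (b := k)
    rw [sub_add_cancel] at h1
    rw [h1, one_mul]
  rw [hc]
  have hsplit : ρ ^ i = ρ ^ k * ρ ^ (i - k) := by
    rw [← ENNReal.zpow_add hρ0' hρt]
    congr 1; ring
  rw [hsplit, ← mul_assoc, mul_comm ((‖(phi p h).coeff (i - k)‖₊ : ℝ≥0∞)) (ρ ^ k), mul_assoc]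
  exact mul_le_mul_right (hbound (i - k)) _
end
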